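/- arXiv:1412.1645 — 2 statements merged into one kernel-verified Lean document; each statement's English description precedes it below -/
import Mathlib

section
/- Let φ, ψ ∈ 𝓗 and suppose that for some k ≥ 0 we have φ_j = 0̃_j for all 0 ≤ j ≤ k (i.e. φ_0 = 1^× and φ_j = 0^× for 1 ≤ j ≤ k). Then the commutator χ = φ^{−1} ⋆ ψ^{−1} ⋆ φ ⋆ ψ (inverses taken in the group (𝓗, ⋆)) satisfies χ_j = 0^× for all 1 ≤ j ≤ k+1, and χ_{k+2} = (conjugate of ψ_1 ∘ φ_{k+1}) · (φ_{k+1} ∘ ψ_1), i.e. χ_{k+2}(x) = \overline{ψ_1(φ_{k+1}(x))}·φ_{k+1}(ψ_1(x)) for all x ∈ 𝕋. -/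
noncomputable section

/-- The circle group 𝕋. -/
abbrev 𝕋 := Circle

/-- Generalised binomial coefficient `C(n,k)` for integer `n`. -/
def gchoose (n : ℤ) (k : ℕ) : ℤ := Ring.choose n k

/-- Signed Stirling numbers of the first kind, `s(k,j)`, determined by
`k! · C(n,k) = Σ_{j=0}^k s(k,j) n^j`. -/
def stir : ℕ → ℕ → ℤ
  | 0, 0 => 1
  | 0, _ + 1 => 0
  | _ + 1, 0 => 0
  | k + 1, j + 1 => stir k j - (k : ℤ) * stir k (j + 1)

/-- `H(𝕋)`: the set of (not necessarily continuous) group homomorphisms 𝕋 → 𝕋,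
as a subset of the product space `𝕋 → 𝕋` (pointwise convergence topology). -/
def HSet : Set (𝕋 → 𝕋) := {f | ∀ x y : 𝕋, f (x * y) = f x * f y}

/-- `𝕋_Q`: the torsion subgroup of 𝕋. -/
def TQ : Set 𝕋 := {x | ∃ n : ℕ, 0 < n ∧ x ^ n = 1}

/-- The space 𝓗 ⊆ H(𝕋)^{ℤ≥0}: sequences satisfying (H.0) and (H.∞). -/
def Hcal : Set (ℕ → 𝕋 → 𝕋) :=
  {φ | (∀ k, φ k ∈ HSet) ∧ φ 0 = (fun x => x) ∧
    ∀ k, 1 ≤ k → ∀ x ∈ TQ,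
      φ k (x ^ Nat.factorial k) = ∏ j ∈ Finset.Icc 1 k, (φ 1)^[j] (x ^ stir k j)}

/-- The element `ñ` (whose `k`-th entry is `C(n,k)^×`), for `n : ℤ`. -/
def ntil (n : ℤ) : ℕ → 𝕋 → 𝕋 := fun k x => x ^ gchoose n k

/-- The homeomorphism `T` of `H(𝕋)^{ℤ≥0}`: `T(φ) = (φ_0, φ_0φ_1, φ_1φ_2, …)`. -/
def Tmap (φ : ℕ → 𝕋 → 𝕋) : ℕ → 𝕋 → 𝕋 :=
  fun k => match k with
  | 0 => φ 0
  | k + 1 => fun x => φ k x * φ (k + 1) x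

/-- The group operation ⋆ on 𝓗: `(φ ⋆ ψ)_k = ∏_{j=0}^k φ_{k-j} ∘ ψ_j`. -/
def hmul (φ ψ : ℕ → 𝕋 → 𝕋) : ℕ → 𝕋 → 𝕋 :=
  fun k x => ∏ j ∈ Finset.range (k + 1), φ (k - j) (ψ j x)

/-! ### Auxiliary lemmas -/

lemma gchoose_zero_pos' (j : ℕ) (hj : 1 ≤ j) : gchoose 0 j = 0 :=
  Ring.choose_zero_pos ℤ hj

lemma hom_one' {f : 𝕋 → 𝕋} (hf : f ∈ HSet) : f 1 = 1 := by
  have h := hf 1 1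
  rw [mul_one] at h
  exact left_eq_mul.mp h

lemma hom_inv' {f : 𝕋 → 𝕋} (hf : f ∈ HSet) (x : 𝕋) : f x⁻¹ = (f x)⁻¹ := by
  apply eq_inv_of_mul_eq_one_left
  rw [← hf, inv_mul_cancel, hom_one' hf]

lemma circle_eq_of_one {a b : 𝕋} (h : a * b = 1) : a = b⁻¹ :=
  eq_inv_of_mul_eq_one_left (mul_comm a b ▸ h)

lemma prod_peelL (f : ℕ → 𝕋) (n : ℕ) (h : ∀ i, i < n → f i = 1) :
    ∏ j ∈ Finset.range (n + 1), f j = f n := by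
  rw [Finset.prod_range_succ,
    Finset.prod_eq_one (fun i hi => h i (Finset.mem_range.mp hi)), one_mul]

lemma prod_peel0 (f : ℕ → 𝕋) (n : ℕ) (h : ∀ i, i < n → f (i + 1) = 1) :
    ∏ j ∈ Finset.range (n + 1), f j = f 0 := by
  rw [Finset.prod_range_succ',
    Finset.prod_eq_one (fun i hi => h i (Finset.mem_range.mp hi)), one_mul]

lemma prod_peel (f : ℕ → 𝕋) (n : ℕ) (h : ∀ i, i < n → f (i + 1) = 1) :
    ∏ j ∈ Finset.range (n + 1 + 1), f j = f 0 * f (n + 1) := by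
  rw [Finset.prod_range_succ, Finset.prod_range_succ',
    Finset.prod_eq_one (fun i hi => h i (Finset.mem_range.mp hi)), one_mul]

lemma prod_peel2 (f : ℕ → 𝕋) (n : ℕ) (h : ∀ i, i < n → f (i + 2) = 1) :
    ∏ j ∈ Finset.range (n + 2 + 1), f j = f 1 * f 0 * f (n + 2) := by
  show ∏ j ∈ Finset.range (n + 1 + 1 + 1), f j = _
  rw [Finset.prod_range_succ, Finset.prod_range_succ', Finset.prod_range_succ',
    Finset.prod_eq_one (fun i hi => h i (Finset.mem_range.mp hi)), one_mul]

lemma prod_peelB (f : ℕ → 𝕋) (n : ℕ) (h : ∀ i, i < n → f (i + 1) = 1) :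
    ∏ j ∈ Finset.range (n + 2 + 1), f j = f 0 * f (n + 1) * f (n + 2) := by
  show ∏ j ∈ Finset.range (n + 1 + 1 + 1), f j = _
  rw [Finset.prod_range_succ, Finset.prod_range_succ, Finset.prod_range_succ',
    Finset.prod_eq_one (fun i hi => h i (Finset.mem_range.mp hi)), one_mul]

lemma final_calc (a b c d e : 𝕋) :
    c⁻¹ * (a * (e * d)⁻¹ * c * (e * b⁻¹) * d) = b⁻¹ * a := by
  have hne : ∀ x : 𝕋, (x : ℂ) ≠ 0 := fun x => Circle.coe_ne_zero x
  apply Subtype.ext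
  push_cast
  field_simp

/-- Commutator computation in `(𝓗, ⋆)`: if `φ_j = 0̃_j` for `0 ≤ j ≤ k`, then the
commutator `χ = φ⁻¹ ⋆ ψ⁻¹ ⋆ φ ⋆ ψ` satisfies `χ_j = 0^×` for `1 ≤ j ≤ k+1` and
`χ_{k+2}(x) = (ψ_1(φ_{k+1}(x)))⁻¹ · φ_{k+1}(ψ_1(x))` (conjugation on 𝕋 being
inversion). Inverses are specified via two-sided inverse elements of `(𝓗, ⋆)`,
whose identity element is `0̃ = ntil 0`. -/
theorem stmt9 (φ ψ φi ψi : ℕ → 𝕋 → 𝕋)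
    (hφ : φ ∈ Hcal) (hψ : ψ ∈ Hcal) (hφi : φi ∈ Hcal) (hψi : ψi ∈ Hcal)
    (hφinv : hmul φi φ = ntil 0 ∧ hmul φ φi = ntil 0)
    (hψinv : hmul ψi ψ = ntil 0 ∧ hmul ψ ψi = ntil 0)
    (k : ℕ) (hk : ∀ j ≤ k, φ j = ntil 0 j) :
    (∀ j, 1 ≤ j → j ≤ k + 1 → hmul (hmul (hmul φi ψi) φ) ψ j = fun x : 𝕋 => x ^ (0 : ℤ)) ∧
    (hmul (hmul (hmul φi ψi) φ) ψ (k + 2) =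
      fun x : 𝕋 => (ψ 1 (φ (k + 1) x))⁻¹ * φ (k + 1) (ψ 1 x)) := by
  -- basic pointwise facts
  have hφ0 : ∀ x : 𝕋, φ 0 x = x := fun x => by rw [hφ.2.1]
  have hψ0 : ∀ x : 𝕋, ψ 0 x = x := fun x => by rw [hψ.2.1]
  have hφi0 : ∀ x : 𝕋, φi 0 x = x := fun x => by rw [hφi.2.1]
  have hψi0 : ∀ x : 𝕋, ψi 0 x = x := fun x => by rw [hψi.2.1]
  have hφi1 : ∀ n, φi n 1 = 1 := fun n => hom_one' (hφi.1 n)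
  have hψi1' : ∀ n, ψi n 1 = 1 := fun n => hom_one' (hψi.1 n)
  have hφtriv : ∀ c, 1 ≤ c → c ≤ k → ∀ x : 𝕋, φ c x = 1 := by
    intro c h1 h2 x
    rw [hk c h2]
    show x ^ gchoose 0 c = 1
    rw [gchoose_zero_pos' c h1, zpow_zero]
  -- expanded forms of the inverse equations
  have Eφ : ∀ n (x : 𝕋),
      (∏ j ∈ Finset.range (n + 1), φi (n - j) (φ j x)) = x ^ gchoose 0 n :=
    fun n x => congrFun (congrFun hφinv.1 n) x
  have Eψ : ∀ n (x : 𝕋),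
      (∏ j ∈ Finset.range (n + 1), ψi (n - j) (ψ j x)) = x ^ gchoose 0 n :=
    fun n x => congrFun (congrFun hψinv.1 n) x
  -- φi is trivial in degrees 1..k
  have hφitriv : ∀ a, 1 ≤ a → a ≤ k → ∀ x : 𝕋, φi a x = 1 := by
    intro a h1 h2 x
    have E := Eφ a x
    rw [gchoose_zero_pos' a h1, zpow_zero,
      prod_peel0 (fun j => φi (a - j) (φ j x)) a
        (fun i hi => by
          show φi (a - (i + 1)) (φ (i + 1) x) = 1
          rw [hφtriv (i + 1) (by omega) (by omega), hφi1])] at E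
    show φi a x = 1
    calc φi a x = φi (a - 0) (φ 0 x) := by rw [hφ0 x, Nat.sub_zero]
      _ = 1 := E
  -- φi (k+1) is the pointwise inverse of φ (k+1)
  have hφik1 : ∀ x : 𝕋, φi (k + 1) x = (φ (k + 1) x)⁻¹ := by
    intro x
    have E := Eφ (k + 1) x
    rw [gchoose_zero_pos' (k + 1) (by omega), zpow_zero,
      prod_peel (fun j => φi (k + 1 - j) (φ j x)) k
        (fun i hi => hφitriv (k + 1 - (i + 1)) (by omega) (by omega) _)] at E
    apply circle_eq_of_one
    calc φi (k + 1) x * φ (k + 1) x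
        = φi (k + 1 - 0) (φ 0 x) * φi (k + 1 - (k + 1)) (φ (k + 1) x) := by
          rw [hφ0 x, Nat.sub_zero, Nat.sub_self, hφi0]
      _ = 1 := E
  -- the degree-(k+2) relation for φi
  have hφik2 : ∀ x : 𝕋, φi (k + 2) x = (φi (k + 1) (φ 1 x) * φ (k + 2) x)⁻¹ := by
    intro x
    have E := Eφ (k + 2) x
    rw [gchoose_zero_pos' (k + 2) (by omega), zpow_zero,
      prod_peel2 (fun j => φi (k + 2 - j) (φ j x)) k
        (fun i hi => hφitriv (k + 2 - (i + 2)) (by omega) (by omega) _)] at E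
    apply circle_eq_of_one
    calc φi (k + 2) x * (φi (k + 1) (φ 1 x) * φ (k + 2) x)
        = φi (k + 2 - 1) (φ 1 x) * φi (k + 2 - 0) (φ 0 x)
            * φi (k + 2 - (k + 2)) (φ (k + 2) x) := by
          rw [hφ0 x, Nat.sub_zero, Nat.sub_self, hφi0,
            show k + 2 - 1 = k + 1 from rfl, ← mul_assoc,
            mul_comm (φi (k + 2) x) (φi (k + 1) (φ 1 x))]
      _ = 1 := E
  -- ψi 1 is the pointwise inverse of ψ 1
  have hψinv1 : ∀ x : 𝕋, ψi 1 x = (ψ 1 x)⁻¹ := by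
    intro x
    have E := Eψ 1 x
    rw [gchoose_zero_pos' 1 le_rfl, zpow_zero, Finset.prod_range_succ,
      Finset.prod_range_one] at E
    apply circle_eq_of_one
    calc ψi 1 x * ψ 1 x = ψi (1 - 0) (ψ 0 x) * ψi (1 - 1) (ψ 1 x) := by
          rw [hψ0 x, hψi0]
      _ = 1 := E
  -- mixed-degree identity
  have hmix : ∀ x : 𝕋, φi 1 (φ (k + 1) x) = φi (k + 1) (φ 1 x) := by
    intro x
    rcases Nat.eq_zero_or_pos k with hk0 | hk0
    · subst hk0; rfl
    · rw [hφitriv 1 le_rfl hk0, hφtriv 1 le_rfl hk0, hφi1]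
  -- facts about A = hmul φi ψi
  have hAone : ∀ m, hmul φi ψi m 1 = 1 := by
    intro m
    show (∏ j ∈ Finset.range (m + 1), φi (m - j) (ψi j 1)) = 1
    exact Finset.prod_eq_one fun i _ => by rw [hψi1', hφi1]
  have hA0 : ∀ y : 𝕋, hmul φi ψi 0 y = y := by
    intro y
    show (∏ j ∈ Finset.range (0 + 1), φi (0 - j) (ψi j y)) = y
    rw [Finset.prod_range_succ, Finset.prod_range_zero, one_mul, hψi0]
    exact hφi0 y
  have hA1 : ∀ y : 𝕋, hmul φi ψi 1 y = φi 1 y * ψi 1 y := by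
    intro y
    show (∏ j ∈ Finset.range (1 + 1), φi (1 - j) (ψi j y)) = _
    rw [Finset.prod_range_succ, Finset.prod_range_succ, Finset.prod_range_zero,
      one_mul, hψi0]
    exact congrArg (fun t => φi 1 y * t) (hφi0 (ψi 1 y))
  have hAn : ∀ n, n ≤ k → ∀ y : 𝕋, hmul φi ψi n y = ψi n y := by
    intro n hn y
    show (∏ j ∈ Finset.range (n + 1), φi (n - j) (ψi j y)) = ψi n y
    rw [prod_peelL (fun j => φi (n - j) (ψi j y)) n
      (fun i hi => hφitriv (n - i) (by omega) (by omega) _)]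
    show φi (n - n) (ψi n y) = ψi n y
    rw [Nat.sub_self]
    exact hφi0 _
  have hAk1 : ∀ y : 𝕋, hmul φi ψi (k + 1) y = φi (k + 1) y * ψi (k + 1) y := by
    intro y
    show (∏ j ∈ Finset.range (k + 1 + 1), φi (k + 1 - j) (ψi j y)) = _
    rw [prod_peel (fun j => φi (k + 1 - j) (ψi j y)) k
      (fun i hi => hφitriv (k + 1 - (i + 1)) (by omega) (by omega) _)]
    show φi (k + 1 - 0) (ψi 0 y) * φi (k + 1 - (k + 1)) (ψi (k + 1) y) = _
    rw [Nat.sub_zero, Nat.sub_self, hψi0, hφi0]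
  have hAk2 : ∀ y : 𝕋, hmul φi ψi (k + 2) y
      = φi (k + 1) (ψi 1 y) * φi (k + 2) y * ψi (k + 2) y := by
    intro y
    show (∏ j ∈ Finset.range (k + 2 + 1), φi (k + 2 - j) (ψi j y)) = _
    rw [prod_peel2 (fun j => φi (k + 2 - j) (ψi j y)) k
      (fun i hi => hφitriv (k + 2 - (i + 2)) (by omega) (by omega) _)]
    show φi (k + 2 - 1) (ψi 1 y) * φi (k + 2 - 0) (ψi 0 y)
        * φi (k + 2 - (k + 2)) (ψi (k + 2) y) = _
    rw [show k + 2 - 1 = k + 1 from rfl, Nat.sub_zero, Nat.sub_self, hψi0, hφi0]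
  -- facts about B = hmul (hmul φi ψi) φ
  have hBn : ∀ n, n ≤ k + 1 → ∀ y : 𝕋, hmul (hmul φi ψi) φ n y = ψi n y := by
    intro n hn y
    rcases Nat.lt_or_ge n (k + 1) with h | h
    · show (∏ j ∈ Finset.range (n + 1), hmul φi ψi (n - j) (φ j y)) = ψi n y
      rw [prod_peel0 (fun j => hmul φi ψi (n - j) (φ j y)) n
        (fun i hi => by
          show hmul φi ψi (n - (i + 1)) (φ (i + 1) y) = 1
          rw [hφtriv (i + 1) (by omega) (by omega), hAone])]
      show hmul φi ψi (n - 0) (φ 0 y) = ψi n y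
      rw [Nat.sub_zero, hφ0, hAn n (by omega)]
    · have hn' : n = k + 1 := by omega
      subst hn'
      show (∏ j ∈ Finset.range (k + 1 + 1), hmul φi ψi (k + 1 - j) (φ j y)) = _
      rw [prod_peel (fun j => hmul φi ψi (k + 1 - j) (φ j y)) k
        (fun i hi => by
          show hmul φi ψi (k + 1 - (i + 1)) (φ (i + 1) y) = 1
          rw [hφtriv (i + 1) (by omega) (by omega), hAone])]
      show hmul φi ψi (k + 1 - 0) (φ 0 y) * hmul φi ψi (k + 1 - (k + 1)) (φ (k + 1) y) = _
      rw [Nat.sub_zero, Nat.sub_self, hφ0, hAk1 y, hA0, hφik1 y,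
        mul_right_comm, inv_mul_cancel, one_mul]
  have hBk2 : ∀ y : 𝕋, hmul (hmul φi ψi) φ (k + 2) y
      = hmul φi ψi (k + 2) y * hmul φi ψi 1 (φ (k + 1) y)
        * hmul φi ψi 0 (φ (k + 2) y) := by
    intro y
    show (∏ j ∈ Finset.range (k + 2 + 1), hmul φi ψi (k + 2 - j) (φ j y)) = _
    rw [prod_peelB (fun j => hmul φi ψi (k + 2 - j) (φ j y)) k
      (fun i hi => by
        show hmul φi ψi (k + 2 - (i + 1)) (φ (i + 1) y) = 1
        rw [hφtriv (i + 1) (by omega) (by omega), hAone])]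
    show hmul φi ψi (k + 2 - 0) (φ 0 y) * hmul φi ψi (k + 2 - (k + 1)) (φ (k + 1) y)
        * hmul φi ψi (k + 2 - (k + 2)) (φ (k + 2) y) = _
    rw [Nat.sub_zero, Nat.sub_self, hφ0,
      show k + 2 - (k + 1) = 1 from by omega]
  constructor
  · -- degrees 1..k+1 are trivial
    intro j hj1 hj2
    funext x
    have e2 : (∏ i ∈ Finset.range (j + 1), hmul (hmul φi ψi) φ (j - i) (ψ i x))
        = ∏ i ∈ Finset.range (j + 1), ψi (j - i) (ψ i x) :=
      Finset.prod_congr rfl (fun i _ => hBn (j - i) (by omega) (ψ i x))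
    calc hmul (hmul (hmul φi ψi) φ) ψ j x
        = ∏ i ∈ Finset.range (j + 1), hmul (hmul φi ψi) φ (j - i) (ψ i x) := rfl
      _ = ∏ i ∈ Finset.range (j + 1), ψi (j - i) (ψ i x) := e2
      _ = x ^ gchoose 0 j := Eψ j x
      _ = x ^ (0 : ℤ) := by rw [gchoose_zero_pos' j hj1]
  · -- degree k+2
    funext x
    have e1 : hmul (hmul (hmul φi ψi) φ) ψ (k + 2) x
        = (∏ i ∈ Finset.range (k + 2), hmul (hmul φi ψi) φ (k + 2 - (i + 1)) (ψ (i + 1) x))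
          * hmul (hmul φi ψi) φ (k + 2) (ψ 0 x) :=
      Finset.prod_range_succ' (fun i => hmul (hmul φi ψi) φ (k + 2 - i) (ψ i x)) (k + 2)
    have E : (∏ i ∈ Finset.range (k + 2), ψi (k + 2 - (i + 1)) (ψ (i + 1) x))
        * ψi (k + 2) (ψ 0 x) = x ^ gchoose 0 (k + 2) :=
      (Finset.prod_range_succ' (fun j => ψi (k + 2 - j) (ψ j x)) (k + 2)).symm.trans
        (Eψ (k + 2) x)
    rw [hψ0 x, gchoose_zero_pos' (k + 2) (by omega), zpow_zero] at E
    have e2 : (∏ i ∈ Finset.range (k + 2), hmul (hmul φi ψi) φ (k + 2 - (i + 1)) (ψ (i + 1) x))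
        = ∏ i ∈ Finset.range (k + 2), ψi (k + 2 - (i + 1)) (ψ (i + 1) x) :=
      Finset.prod_congr rfl (fun i _ => hBn _ (by omega) _)
    rw [e1, hψ0 x, e2, circle_eq_of_one E, hBk2 x, hAk2 x, hA1 (φ (k + 1) x),
      hA0 (φ (k + 2) x), hφik2 x, hmix x, hψinv1 x, hψinv1 (φ (k + 1) x),
      hom_inv' (hφi.1 (k + 1)) (ψ 1 x), hφik1 (ψ 1 x), inv_inv]
    exact final_calc (φ (k + 1) (ψ 1 x)) (ψ 1 (φ (k + 1) x)) (ψi (k + 2) x)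
      (φ (k + 2) x) (φi (k + 1) (φ 1 x))
end
end

section
/- For the dynamical system (𝓗, T) and the point 0̃ ∈ 𝓗, one has ω_{0̃} C(𝓗) = 𝒲; that is, the algebra {(f(T^n 0̃))_{n∈ℤ} : f ∈ C(𝓗)} ⊆ ℓ^∞(ℤ) equals the Weyl algebra 𝒲. -/
noncomputable section

/-- The quasi-eigenfunction groups `G_m(X,u)` inside `C(X, ℂ)` (unimodular
continuous functions): `G_0` = unimodular constants,
`G_{m+1} = {g unimodular : g ∘ u = f · g for some f ∈ G_m}`. -/
def QEm {X : Type*} [TopologicalSpace X] (u : X → X) : ℕ → Set C(X, ℂ)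
  | 0 => {g | (∀ x, ‖g x‖ = 1) ∧ ∃ c : ℂ, ∀ x, g x = c}
  | m + 1 => {g | (∀ x, ‖g x‖ = 1) ∧ ∃ f ∈ QEm u m, ∀ x, g (u x) = f x * g x}

/-- `(X,u)` has (topological) quasi-discrete spectrum: the linear span of the
quasi-eigenfunctions `G(X,u) = ⋃_m G_m(X,u)` is dense in `C(X, ℂ)`. -/
def HasQDS {X : Type*} [TopologicalSpace X] (u : X → X) : Prop :=
  Dense (↑(Submodule.span ℂ (⋃ m, QEm u m)) : Set C(X, ℂ))

/-- The map `ω_x : C(X) → ℓ^∞(ℤ)`, `ω_x(f)(n) = f(s^n x)`. -/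
def omegaSeq {X : Type*} [TopologicalSpace X] [CompactSpace X]
    (s : Equiv.Perm X) (x : X) (f : C(X, ℂ)) : BoundedContinuousFunction ℤ ℂ :=
  (BoundedContinuousFunction.mkOfCompact f).compContinuous
    ⟨fun n : ℤ => (s ^ n) x, continuous_of_discreteTopology⟩

/-- `𝒫_m ⊆ ℓ^∞(ℤ)`: sequences `n ↦ e^{2πi p(n)}`, `p` a real polynomial of
degree at most `m`. -/
def Pdeg (m : ℕ) : Set (BoundedContinuousFunction ℤ ℂ) :=
  {F | ∃ p : Polynomial ℝ, p.natDegree ≤ m ∧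
    ∀ n : ℤ, F n = Complex.exp (2 * Real.pi * Complex.I * ((p.eval (n : ℝ) : ℝ) : ℂ))}

/-- `𝒫 = ⋃_m 𝒫_m`: all sequences of polynomial type. -/
def Pall : Set (BoundedContinuousFunction ℤ ℂ) := ⋃ m, Pdeg m

/-- The Weyl algebra `𝒲`: the closed linear span of `𝒫` in `ℓ^∞(ℤ)`. -/
def Wset : Set (BoundedContinuousFunction ℤ ℂ) :=
  closure (↑(Submodule.span ℂ Pall) : Set (BoundedContinuousFunction ℤ ℂ))

lemma stir_eq_zero_of_lt : ∀ k j, k < j → stir k j = 0 := by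
  intro k
  induction k with
  | zero => intro j hj; match j, hj with | j+1, _ => rfl
  | succ k ih =>
    intro j hj
    match j, hj with
    | j+1, hj =>
      have h1 : k < j := Nat.lt_of_succ_lt_succ hj
      have h2 : k < j + 1 := Nat.lt_succ_of_lt h1
      show stir k j - (k : ℤ) * stir k (j+1) = 0
      rw [ih j h1, ih (j+1) h2]; ring

lemma stir_succ_zero (k : ℕ) : stir (k+1) 0 = 0 := rfl

open Finset Polynomial in
lemma sum_stir_eq (k : ℕ) (n : ℤ) :
    ∑ j ∈ range (k+1), stir k j * n ^ j = (descPochhammer ℤ k).eval n := by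
  induction k with
  | zero => simp [stir, descPochhammer_zero]
  | succ k ih =>
    have h0 : ((k : ℤ)) * stir k 0 = 0 := by
      cases k with
      | zero => simp
      | succ m => rw [stir_succ_zero]; ring
    rw [descPochhammer_succ_right, eval_mul, ← ih,
      Finset.sum_range_succ' (fun j => stir (k+1) j * n ^ j) (k+1)]
    have hs : ∀ j, stir (k+1) (j+1) = stir k j - (k : ℤ) * stir k (j+1) := fun j => rfl
    have hB : ∑ j ∈ range (k+1), stir k (j+1) * n ^ (j+1)
        = (∑ j ∈ range (k+1), stir k j * n ^ j) - stir k 0 := by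
      have := Finset.sum_range_succ' (fun j => stir k j * n ^ j) (k+1)
      have htop : ∑ j ∈ range (k+1+1), stir k j * n ^ j
          = ∑ j ∈ range (k+1), stir k j * n ^ j := by
        rw [Finset.sum_range_succ, stir_eq_zero_of_lt k (k+1) (Nat.lt_succ_self k)]
        ring
      rw [htop] at this
      simp only [pow_zero, mul_one] at this
      linarith [this]
    have hn : ∑ j ∈ range (k+1), stir k j * n ^ (j+1)
        = (∑ j ∈ range (k+1), stir k j * n ^ j) * n := by
      rw [Finset.sum_mul]; exact Finset.sum_congr rfl fun j _ => by ring
    have hA : ∑ j ∈ range (k+1), stir (k+1) (j+1) * n ^ (j+1)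
        = (∑ j ∈ range (k+1), stir k j * n ^ (j+1))
          - (k : ℤ) * ∑ j ∈ range (k+1), stir k (j+1) * n ^ (j+1) := by
      rw [Finset.mul_sum, ← Finset.sum_sub_distrib]
      exact Finset.sum_congr rfl fun j _ => by rw [hs j]; ring
    rw [hA, hn, hB, stir_succ_zero]
    simp only [eval_sub, eval_X, eval_natCast, pow_zero, mul_one]
    linear_combination h0
open Polynomial in
lemma fact_mul_gchoose (k : ℕ) (n : ℤ) :
    (k.factorial : ℤ) * gchoose n k = (descPochhammer ℤ k).eval n := by
  rw [eval_eq_smeval, Ring.descPochhammer_eq_factorial_smul_choose, nsmul_eq_mul]; rfl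

open Finset in
lemma key_exponent (k : ℕ) (hk : 1 ≤ k) (n : ℤ) :
    (k.factorial : ℤ) * gchoose n k = ∑ j ∈ Icc 1 k, stir k j * n ^ j := by
  rw [fact_mul_gchoose, ← sum_stir_eq]
  have : range (k+1) = insert 0 (Icc 1 k) := by
    ext j
    simp [Nat.lt_succ_iff, Nat.one_le_iff_ne_zero]
    omega
  rw [this, Finset.sum_insert (by simp)]
  have h0 : stir k 0 = 0 := by
    cases k with
    | zero => omega
    | succ m => exact stir_succ_zero m
  rw [h0]
  ring

-- Circle coercion of zpow
lemma circle_coe_zpow (x : 𝕋) (m : ℤ) : ((x ^ m : 𝕋) : ℂ) = (x : ℂ) ^ m := by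
  cases m with
  | ofNat k => push_cast [zpow_natCast]; exact map_pow Circle.coeHom x k
  | negSucc k =>
    rw [zpow_negSucc, zpow_negSucc, Circle.coe_inv]
    norm_cast

lemma circle_exp_zpow (a : ℝ) (m : ℤ) :
    Circle.exp a ^ m = Circle.exp (m * a) := by
  apply Circle.ext
  rw [circle_coe_zpow, Circle.coe_exp, Circle.coe_exp, ← Complex.exp_int_mul]
  push_cast
  ring_nf

-- (H.∞)-type identity for ntil, valid for all x
lemma ntil_mem_Hcal (n : ℤ) : ntil n ∈ Hcal := by
  refine ⟨fun k x y => mul_zpow x y _, ?_, ?_⟩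
  · funext x
    simp [ntil, gchoose, Ring.choose_zero_right, zpow_one]
  · intro k hk x _
    have h1 : ntil n 1 = fun y => y ^ n := by
      funext y; simp [ntil, gchoose, Ring.choose_one_right]
    have hit : ∀ (j : ℕ) (y : 𝕋), (ntil n 1)^[j] y = y ^ (n ^ j) := by
      intro j
      induction j with
      | zero => intro y; simp
      | succ j ih =>
        intro y
        rw [Function.iterate_succ_apply, ih, h1]
        show ((y ^ n) : 𝕋) ^ n ^ j = y ^ n ^ (j+1)
        rw [pow_succ', zpow_mul]
    have hxz : ∀ c : ℕ → ℤ, ∏ j ∈ Finset.Icc 1 k, x ^ c j = x ^ (∑ j ∈ Finset.Icc 1 k, c j) := by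
      intro c
      induction (Finset.Icc 1 k) using Finset.induction_on with
      | empty => simp
      | insert _ _ hnotmem ih =>
        rw [Finset.prod_insert hnotmem, Finset.sum_insert hnotmem, ih, zpow_add]
    have : ∀ j ∈ Finset.Icc 1 k, (ntil n 1)^[j] (x ^ stir k j) = x ^ (stir k j * n ^ j) := by
      intro j _
      rw [hit j, ← zpow_mul]
    rw [Finset.prod_congr rfl this, hxz, ← key_exponent k hk n]
    show (x ^ (k.factorial : ℕ)) ^ gchoose n k = _
    rw [← zpow_natCast, ← zpow_mul, mul_comm]
lemma Tmap_ntil (n : ℤ) : Tmap (ntil n) = ntil (n + 1) := by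
  funext k
  match k with
  | 0 =>
    show ntil n 0 = ntil (n+1) 0
    funext x
    simp [ntil, gchoose, Ring.choose_zero_right]
  | k + 1 =>
    funext x
    show ntil n k x * ntil n (k+1) x = ntil (n+1) (k+1) x
    simp only [ntil, gchoose]
    rw [← zpow_add, Ring.choose_succ_succ]

/-- The orbit element as a subtype element. -/
def eH (n : ℤ) : ↥Hcal := ⟨ntil n, ntil_mem_Hcal n⟩

section orbit
variable [CompactSpace ↥Hcal] (TH : Equiv.Perm ↥Hcal)
  (hTH : ∀ φ : ↥Hcal, ((TH φ : ↥Hcal) : ℕ → 𝕋 → 𝕋) = Tmap ↑φ)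

include hTH in
lemma TH_eH (n : ℤ) : TH (eH n) = eH (n + 1) := by
  apply Subtype.ext
  rw [hTH]
  exact Tmap_ntil n

include hTH in
lemma orbit_eq (z0 : ↥Hcal) (hz0 : (z0 : ℕ → 𝕋 → 𝕋) = ntil 0) (n : ℤ) :
    (TH ^ n) z0 = eH n := by
  have hz : z0 = eH 0 := Subtype.ext hz0
  induction n using Int.induction_on with
  | zero => simpa using hz
  | succ n ih =>
    have hstep : TH ^ ((n : ℤ) + 1) = TH * TH ^ (n : ℤ) := by
      rw [add_comm, zpow_one_add]
    rw [hstep, Equiv.Perm.mul_apply, ih, TH_eH TH hTH]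
  | pred n ih =>
    apply TH.injective
    rw [← Equiv.Perm.mul_apply, ← zpow_one_add, TH_eH TH hTH]
    have h1 : (1 : ℤ) + (-(n:ℤ) - 1) = -(n:ℤ) := by ring
    rw [h1, ih]
    congr 1
    ring
end orbit
open Polynomial

/-- The binomial-coefficient polynomial `χ_k(t) = t(t-1)⋯(t-k+1)/k!`. -/
def chi (k : ℕ) : Polynomial ℝ := Polynomial.C ((k.factorial : ℝ)⁻¹) * descPochhammer ℝ k

lemma chi_eval_int (k : ℕ) (n : ℤ) : (chi k).eval (n : ℝ) = (gchoose n k : ℝ) := by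
  have h1 : (((descPochhammer ℤ k).eval n : ℤ) : ℝ) = (descPochhammer ℝ k).eval ((n : ℤ) : ℝ) :=
    descPochhammer_eval_cast (R := ℝ) k n
  have h2 := fact_mul_gchoose k n
  have h3 : ((k.factorial : ℤ) : ℝ) ≠ 0 := by positivity
  rw [chi, eval_mul, eval_C, ← h1, ← h2]
  push_cast
  field_simp

lemma chi_natDegree_le (k : ℕ) : (chi k).natDegree ≤ k := by
  refine le_trans (natDegree_mul_le) ?_
  simp [descPochhammer_natDegree]

lemma chi_coeff_self (k : ℕ) : (chi k).coeff k = (k.factorial : ℝ)⁻¹ := by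
  rw [chi, coeff_C_mul]
  have : (descPochhammer ℝ k).coeff k = 1 := by
    have hm := monic_descPochhammer ℝ k
    have hd := descPochhammer_natDegree (R := ℝ) k
    have := hm.coeff_natDegree
    rwa [hd] at this
  rw [this, mul_one]

lemma poly_decomp : ∀ d : ℕ, ∀ p : Polynomial ℝ, p.natDegree ≤ d →
    ∃ a : ℕ → ℝ, p = ∑ k ∈ Finset.range (d+1), Polynomial.C (a k) * chi k := by
  intro d
  induction d with
  | zero =>
    intro p hp
    refine ⟨fun _ => p.coeff 0, ?_⟩
    have : p = Polynomial.C (p.coeff 0) := Polynomial.eq_C_of_natDegree_le_zero hp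
    rw [this]
    simp [chi, descPochhammer_zero]
  | succ d ih =>
    intro p hp
    set c := p.coeff (d+1) * (d+1).factorial with hc
    set q := p - Polynomial.C c * chi (d+1) with hq
    have hqd : q.natDegree ≤ d := by
      rw [Polynomial.natDegree_le_iff_coeff_eq_zero]
      intro m hm
      rcases Nat.lt_or_ge (d+1) m with h | h
      · have h1 : p.coeff m = 0 := Polynomial.coeff_eq_zero_of_natDegree_lt (lt_of_le_of_lt hp h)
        have h2 : (chi (d+1)).coeff m = 0 :=
          Polynomial.coeff_eq_zero_of_natDegree_lt (lt_of_le_of_lt (chi_natDegree_le (d+1)) h)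
        simp [hq, h1, coeff_C_mul, h2]
      · have hm1 : m = d + 1 := le_antisymm h hm
        subst hm1
        simp only [hq, Polynomial.coeff_sub, coeff_C_mul, chi_coeff_self]
        rw [hc]
        have : ((d+1).factorial : ℝ) ≠ 0 := by positivity
        field_simp
        ring
    obtain ⟨a, ha⟩ := ih q hqd
    refine ⟨fun k => if k = d + 1 then c else a k, ?_⟩
    rw [Finset.sum_range_succ]
    beta_reduce
    rw [if_pos rfl]
    have : ∑ k ∈ Finset.range (d+1), Polynomial.C (if k = d + 1 then c else a k) * chi k
        = ∑ k ∈ Finset.range (d+1), Polynomial.C (a k) * chi k := by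
      apply Finset.sum_congr rfl
      intro k hk
      have hk' : k ≠ d + 1 := by have := Finset.mem_range.mp hk; omega
      rw [if_neg hk']
    rw [this, ← ha, hq]
    ring
section omega
variable [CompactSpace ↥Hcal]

/-- Evaluation characters on 𝓗. -/
def Efun (k : ℕ) (x : 𝕋) : C(↥Hcal, ℂ) :=
  ⟨fun φ => ((φ : ℕ → 𝕋 → 𝕋) k x : ℂ), by
    apply Continuous.comp continuous_induced_dom
    exact (continuous_apply x).comp ((continuous_apply k).comp continuous_subtype_val)⟩

@[simp] lemma Efun_apply (k : ℕ) (x : 𝕋) (φ : ↥Hcal) :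
    Efun k x φ = ((φ : ℕ → 𝕋 → 𝕋) k x : ℂ) := rfl

variable {X : Type*} [TopologicalSpace X] [CompactSpace X] (s : Equiv.Perm X) (x : X)

lemma omegaSeq_apply (f : C(X, ℂ)) (n : ℤ) : omegaSeq s x f n = f ((s ^ n) x) := rfl

lemma omegaSeq_add (f g : C(X, ℂ)) :
    omegaSeq s x (f + g) = omegaSeq s x f + omegaSeq s x g := by
  ext n; simp [omegaSeq]

lemma omegaSeq_smul (c : ℂ) (f : C(X, ℂ)) :
    omegaSeq s x (c • f) = c • omegaSeq s x f := by
  ext n; simp [omegaSeq]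

lemma omegaSeq_mul (f g : C(X, ℂ)) :
    omegaSeq s x (f * g) = omegaSeq s x f * omegaSeq s x g := by
  ext n; simp [omegaSeq]

lemma omegaSeq_star (f : C(X, ℂ)) :
    omegaSeq s x (star f) = star (omegaSeq s x f) := by
  ext n; simp [omegaSeq]

lemma omegaSeq_const (c : ℂ) :
    omegaSeq s x (ContinuousMap.const X c) = c • 1 := by
  ext n; simp [omegaSeq]

lemma omegaSeq_norm_le (f : C(X, ℂ)) : ‖omegaSeq s x f‖ ≤ ‖f‖ := by
  apply BoundedContinuousFunction.norm_le (norm_nonneg f) |>.mpr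
  intro n
  exact f.norm_coe_le_norm _

lemma omegaSeq_continuous : Continuous (omegaSeq s x) := by
  have : ∀ f g : C(X, ℂ), dist (omegaSeq s x f) (omegaSeq s x g) ≤ dist f g := by
    intro f g
    rw [dist_eq_norm, dist_eq_norm]
    calc ‖omegaSeq s x f - omegaSeq s x g‖ = ‖omegaSeq s x (f - g)‖ := by
          rw [sub_eq_add_neg, sub_eq_add_neg, ← neg_one_smul ℂ g, omegaSeq_add,
            omegaSeq_smul, neg_one_smul]
      _ ≤ ‖f - g‖ := omegaSeq_norm_le s x _
  exact LipschitzWith.continuous (LipschitzWith.of_dist_le_mul (K := 1)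
    (fun f g => by simpa using this f g))

end omega
section pall
open scoped Pointwise

lemma one_mem_Pall : (1 : BoundedContinuousFunction ℤ ℂ) ∈ Pall := by
  refine Set.mem_iUnion.mpr ⟨0, 0, by simp, fun n => ?_⟩
  simp

lemma mul_mem_Pall {F G : BoundedContinuousFunction ℤ ℂ} (hF : F ∈ Pall) (hG : G ∈ Pall) :
    F * G ∈ Pall := by
  obtain ⟨_, ⟨m, rfl⟩, p, hp, hFp⟩ := hF
  obtain ⟨_, ⟨m', rfl⟩, q, hq, hGq⟩ := hG
  refine Set.mem_iUnion.mpr ⟨max m m', p + q, ?_, fun n => ?_⟩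
  · exact le_trans (Polynomial.natDegree_add_le p q) (max_le_max hp hq)
  · rw [BoundedContinuousFunction.mul_apply, hFp, hGq, ← Complex.exp_add]
    congr 1
    rw [Polynomial.eval_add]
    push_cast
    ring

lemma star_mem_Pall {F : BoundedContinuousFunction ℤ ℂ} (hF : F ∈ Pall) : star F ∈ Pall := by
  obtain ⟨_, ⟨m, rfl⟩, p, hp, hFp⟩ := hF
  refine Set.mem_iUnion.mpr ⟨m, -p, by simpa using hp, fun n => ?_⟩
  rw [BoundedContinuousFunction.star_apply, hFp]
  rw [show (star (Complex.exp (2 * (Real.pi:ℂ) * Complex.I * ((p.eval (n:ℝ) : ℝ) : ℂ))) : ℂ)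
      = (starRingEnd ℂ) (Complex.exp (2 * (Real.pi:ℂ) * Complex.I * ((p.eval (n:ℝ) : ℝ) : ℂ)))
      from rfl, ← Complex.exp_conj]
  congr 1
  simp only [Polynomial.eval_neg, map_mul, Complex.conj_I, Complex.conj_ofReal, map_ofNat]
  push_cast
  ring

abbrev spanP : Submodule ℂ (BoundedContinuousFunction ℤ ℂ) := Submodule.span ℂ Pall

lemma mul_mem_spanP {F G : BoundedContinuousFunction ℤ ℂ}
    (hF : F ∈ spanP) (hG : G ∈ spanP) : F * G ∈ spanP := by
  have h1 : F * G ∈ spanP * spanP := Submodule.mul_mem_mul hF hG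
  have h2 : spanP * spanP = Submodule.span ℂ (Pall * Pall) := Submodule.span_mul_span ℂ Pall Pall
  have h3 : Pall * Pall ⊆ Pall := by
    rintro z ⟨a, ha, b, hb, rfl⟩
    exact mul_mem_Pall ha hb
  rw [h2] at h1
  exact Submodule.span_mono h3 h1

lemma star_mem_spanP {F : BoundedContinuousFunction ℤ ℂ} (hF : F ∈ spanP) : star F ∈ spanP := by
  induction hF using Submodule.span_induction with
  | mem z hz => exact Submodule.subset_span (star_mem_Pall hz)
  | zero => simpa using Submodule.zero_mem _
  | add a b _ _ ha hb => rw [star_add]; exact Submodule.add_mem _ ha hb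
  | smul c a _ ha => rw [star_smul]; exact Submodule.smul_mem _ _ ha

lemma Wset_isClosed : IsClosed Wset := isClosed_closure

lemma spanP_subset_Wset : (spanP : Set (BoundedContinuousFunction ℤ ℂ)) ⊆ Wset := subset_closure

lemma add_mem_Wset {F G : BoundedContinuousFunction ℤ ℂ} (hF : F ∈ Wset) (hG : G ∈ Wset) :
    F + G ∈ Wset :=
  map_mem_closure₂ continuous_add hF hG fun _ ha _ hb => Submodule.add_mem _ ha hb

lemma smul_mem_Wset (c : ℂ) {F : BoundedContinuousFunction ℤ ℂ} (hF : F ∈ Wset) :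
    c • F ∈ Wset :=
  map_mem_closure (continuous_const_smul c) hF fun _ ha => Submodule.smul_mem _ _ ha

lemma mul_mem_Wset {F G : BoundedContinuousFunction ℤ ℂ} (hF : F ∈ Wset) (hG : G ∈ Wset) :
    F * G ∈ Wset :=
  map_mem_closure₂ continuous_mul hF hG fun _ ha _ hb => mul_mem_spanP ha hb

lemma star_mem_Wset {F : BoundedContinuousFunction ℤ ℂ} (hF : F ∈ Wset) : star F ∈ Wset :=
  map_mem_closure continuous_star hF fun _ ha => star_mem_spanP ha

lemma smul_one_mem_Wset (c : ℂ) : c • (1 : BoundedContinuousFunction ℤ ℂ) ∈ Wset :=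
  spanP_subset_Wset (Submodule.smul_mem _ _ (Submodule.subset_span one_mem_Pall))

end pall
section omegacomp
variable [CompactSpace ↥Hcal] (TH : Equiv.Perm ↥Hcal)
  (hTH : ∀ φ : ↥Hcal, ((TH φ : ↥Hcal) : ℕ → 𝕋 → 𝕋) = Tmap ↑φ)
  (z0 : ↥Hcal) (hz0 : (z0 : ℕ → 𝕋 → 𝕋) = ntil 0)

include hTH hz0

lemma omega_Efun (k : ℕ) (a : ℝ) (n : ℤ) :
    omegaSeq TH z0 (Efun k (Circle.exp (2 * Real.pi * a))) n
      = Complex.exp (2 * Real.pi * Complex.I * ((a * (gchoose n k : ℝ) : ℝ) : ℂ)) := by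
  rw [omegaSeq_apply, orbit_eq TH hTH z0 hz0 n, Efun_apply]
  show ((ntil n k (Circle.exp (2 * Real.pi * a)) : 𝕋) : ℂ) = _
  rw [show ntil n k (Circle.exp (2 * Real.pi * a))
      = Circle.exp (2 * Real.pi * a) ^ gchoose n k from rfl]
  rw [circle_exp_zpow, Circle.coe_exp]
  congr 1
  push_cast
  ring

lemma omega_Efun_mem_Pall (k : ℕ) (x : 𝕋) :
    omegaSeq TH z0 (Efun k x) ∈ Pall := by
  set a := Complex.arg x / (2 * Real.pi) with ha
  have hx : x = Circle.exp (2 * Real.pi * a) := by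
    rw [ha, mul_div_cancel₀ _ (by positivity : (2 : ℝ) * Real.pi ≠ 0)]
    exact (Circle.exp_arg x).symm
  refine Set.mem_iUnion.mpr ⟨k, Polynomial.C a * chi k, ?_, fun n => ?_⟩
  · exact le_trans (Polynomial.natDegree_mul_le)
      (by simpa using chi_natDegree_le k)
  · rw [hx, omega_Efun TH hTH z0 hz0 k a n]
    congr 2
    rw [Polynomial.eval_mul, Polynomial.eval_C, chi_eval_int]

omit hTH hz0 in
lemma Efun_exp_eH (k : ℕ) (a : ℝ) (n : ℤ) :
    Efun k (Circle.exp (2 * Real.pi * a)) (eH n)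
      = Complex.exp (2 * Real.pi * Complex.I * ((a * (gchoose n k : ℝ) : ℝ) : ℂ)) := by
  rw [Efun_apply]
  show ((ntil n k (Circle.exp (2 * Real.pi * a)) : 𝕋) : ℂ) = _
  rw [show ntil n k (Circle.exp (2 * Real.pi * a))
      = Circle.exp (2 * Real.pi * a) ^ gchoose n k from rfl]
  rw [circle_exp_zpow, Circle.coe_exp]
  congr 1
  push_cast
  ring

lemma Pdeg_subset_range (m : ℕ) :
    Pdeg m ⊆ Set.range (omegaSeq TH z0) := by
  rintro F ⟨p, hp, hFp⟩
  obtain ⟨a, hpa⟩ := poly_decomp m p hp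
  refine ⟨∏ k ∈ Finset.range (m+1), Efun k (Circle.exp (2 * Real.pi * a k)), ?_⟩
  ext n
  rw [omegaSeq_apply, orbit_eq TH hTH z0 hz0 n, ContinuousMap.prod_apply, hFp n]
  have heval : (p.eval (n : ℝ)) = ∑ k ∈ Finset.range (m+1), a k * (gchoose n k : ℝ) := by
    rw [hpa, Polynomial.eval_finset_sum]
    exact Finset.sum_congr rfl fun k _ => by
      rw [Polynomial.eval_mul, Polynomial.eval_C, chi_eval_int]
  rw [heval]
  have : ((∑ k ∈ Finset.range (m+1), a k * (gchoose n k : ℝ) : ℝ) : ℂ)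
      = ∑ k ∈ Finset.range (m+1), ((a k * (gchoose n k : ℝ) : ℝ) : ℂ) := by
    push_cast; rfl
  rw [this, Finset.mul_sum, Complex.exp_sum]
  exact Finset.prod_congr rfl fun k _ => Efun_exp_eH k (a k) n

end omegacomp
section dir1
variable [CompactSpace ↥Hcal] (TH : Equiv.Perm ↥Hcal)
  (hTH : ∀ φ : ↥Hcal, ((TH φ : ↥Hcal) : ℕ → 𝕋 → 𝕋) = Tmap ↑φ)
  (z0 : ↥Hcal) (hz0 : (z0 : ℕ → 𝕋 → 𝕋) = ntil 0)

/-- The star subalgebra of functions whose ω-sequence lies in the Weyl algebra. -/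
def Asub : StarSubalgebra ℂ C(↥Hcal, ℂ) where
  carrier := {f | omegaSeq TH z0 f ∈ Wset}
  mul_mem' := fun hf hg => by
    simp only [Set.mem_setOf_eq, omegaSeq_mul] at *
    exact mul_mem_Wset hf hg
  one_mem' := by
    have h1 : omegaSeq TH z0 (1 : C(↥Hcal, ℂ)) = (1 : ℂ) • 1 := by
      ext n; simp [omegaSeq]
    simp only [Set.mem_setOf_eq, h1]
    exact smul_one_mem_Wset 1
  add_mem' := fun hf hg => by
    simp only [Set.mem_setOf_eq, omegaSeq_add] at *
    exact add_mem_Wset hf hg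
  zero_mem' := by
    have h1 : omegaSeq TH z0 (0 : C(↥Hcal, ℂ)) = (0 : ℂ) • 1 := by
      ext n; simp [omegaSeq]
    simp only [Set.mem_setOf_eq, h1]
    exact smul_one_mem_Wset 0
  algebraMap_mem' := fun c => by
    have h1 : omegaSeq TH z0 (algebraMap ℂ C(↥Hcal, ℂ) c) = c • 1 := by
      ext n; simp [omegaSeq, Algebra.algebraMap_eq_smul_one]
    simp only [Set.mem_setOf_eq, h1]
    exact smul_one_mem_Wset c
  star_mem' := fun hf => by
    simp only [Set.mem_setOf_eq, omegaSeq_star] at *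
    exact star_mem_Wset hf

include hTH hz0 in
lemma range_subset_Wset : Set.range (omegaSeq TH z0) ⊆ Wset := by
  have hE : ∀ (k : ℕ) (x : 𝕋), Efun k x ∈ Asub TH z0 := by
    intro k x
    show omegaSeq TH z0 (Efun k x) ∈ Wset
    exact spanP_subset_Wset
      (Submodule.subset_span (omega_Efun_mem_Pall TH hTH z0 hz0 k x))
  have hsep : (Asub TH z0).SeparatesPoints := by
    intro φ ψ hne
    have : (φ : ℕ → 𝕋 → 𝕋) ≠ (ψ : ℕ → 𝕋 → 𝕋) := fun h => hne (Subtype.ext h)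
    have : ∃ k x, (φ : ℕ → 𝕋 → 𝕋) k x ≠ (ψ : ℕ → 𝕋 → 𝕋) k x := by
      by_contra h
      push_neg at h
      exact this (funext fun k => funext fun x => h k x)
    obtain ⟨k, x, hkx⟩ := this
    refine ⟨_, ⟨Efun k x, hE k x, rfl⟩, ?_⟩
    simp only [Efun_apply]
    exact fun h => hkx (Circle.coe_injective h)
  have htop := ContinuousMap.starSubalgebra_topologicalClosure_eq_top_of_separatesPoints
    (Asub TH z0) hsep
  have hclosed : IsClosed ((Asub TH z0) : Set C(↥Hcal, ℂ)) := by
    have : ((Asub TH z0) : Set C(↥Hcal, ℂ)) = (omegaSeq TH z0) ⁻¹' Wset := rfl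
    rw [this]
    exact Wset_isClosed.preimage (omegaSeq_continuous TH z0)
  rintro F ⟨f, rfl⟩
  have hf : f ∈ (Asub TH z0).topologicalClosure := htop ▸ trivial
  have hf2 : f ∈ closure ((Asub TH z0) : Set C(↥Hcal, ℂ)) := hf
  rw [hclosed.closure_eq] at hf2
  exact hf2
end dir1
section dir2
variable [CompactSpace ↥Hcal] (TH : Equiv.Perm ↥Hcal)
  (hTH : ∀ φ : ↥Hcal, ((TH φ : ↥Hcal) : ℕ → 𝕋 → 𝕋) = Tmap ↑φ)
  (z0 : ↥Hcal) (hz0 : (z0 : ℕ → 𝕋 → 𝕋) = ntil 0)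

/-- ω as a linear map. -/
def omegaLin : C(↥Hcal, ℂ) →ₗ[ℂ] BoundedContinuousFunction ℤ ℂ where
  toFun := omegaSeq TH z0
  map_add' := omegaSeq_add TH z0
  map_smul' := omegaSeq_smul TH z0

include hTH hz0 in
lemma spanP_subset_range :
    (spanP : Set (BoundedContinuousFunction ℤ ℂ)) ⊆ Set.range (omegaSeq TH z0) := by
  have h1 : Pall ⊆ Set.range (omegaSeq TH z0) := by
    rintro F hF
    obtain ⟨_, ⟨m, rfl⟩, hm⟩ := hF
    exact Pdeg_subset_range TH hTH z0 hz0 m hm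
  have h2 : Set.range (omegaSeq TH z0) = (LinearMap.range (omegaLin TH z0) :
      Set (BoundedContinuousFunction ℤ ℂ)) := rfl
  rw [h2] at h1 ⊢
  exact_mod_cast Submodule.span_le.mpr h1

lemma range_isClosed : IsClosed (Set.range (omegaSeq TH z0)) := by
  set A : Set ↥Hcal := Set.range (fun n : ℤ => (TH ^ n) z0) with hA
  set Y : Set ↥Hcal := closure A with hY
  have hYc : IsClosed Y := isClosed_closure
  haveI : CompactSpace Y := isCompact_iff_compactSpace.mp hYc.isCompact
  let pt : ℤ → Y := fun n => ⟨(TH ^ n) z0, subset_closure ⟨n, rfl⟩⟩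
  let J : C(Y, ℂ) → BoundedContinuousFunction ℤ ℂ := fun g =>
    (BoundedContinuousFunction.mkOfCompact g).compContinuous
      ⟨pt, continuous_of_discreteTopology⟩
  have hJ_apply : ∀ g n, J g n = g (pt n) := fun g n => rfl
  have hrange : Set.range (omegaSeq TH z0) = Set.range J := by
    ext F
    constructor
    · rintro ⟨f, rfl⟩
      exact ⟨f.restrict Y, by ext n; rfl⟩
    · rintro ⟨g, rfl⟩
      obtain ⟨f, hf⟩ := ContinuousMap.exists_restrict_eq hYc g
      exact ⟨f, by rw [← hf]; ext n; rfl⟩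
  rw [hrange]
  have hnorm : ∀ g : C(Y, ℂ), ‖J g‖ = ‖g‖ := by
    intro g
    apply le_antisymm
    · exact (BoundedContinuousFunction.norm_le (norm_nonneg g)).mpr
        fun n => g.norm_coe_le_norm (pt n)
    · apply (ContinuousMap.norm_le _ (norm_nonneg (J g))).mpr
      intro y
      have hyc : (y : ↥Hcal) ∈ closure ((↑) '' (Set.range pt)) := by
        have himg : ((↑) '' (Set.range pt) : Set ↥Hcal) = A := by
          ext z
          constructor
          · rintro ⟨w, ⟨n, hn⟩, rfl⟩
            exact ⟨n, by rw [← hn]⟩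
          · rintro ⟨n, rfl⟩; exact ⟨pt n, ⟨n, rfl⟩, rfl⟩
        rw [himg]
        exact y.2
      have hyin : y ∈ closure (Set.range pt) := closure_subtype.mpr hyc
      have hsub : Set.range pt ⊆ {y' : Y | ‖g y'‖ ≤ ‖J g‖} := by
        rintro _ ⟨n, rfl⟩
        have := (J g).norm_coe_le_norm n
        rwa [hJ_apply] at this
      have hcl : IsClosed {y' : Y | ‖g y'‖ ≤ ‖J g‖} :=
        isClosed_le (by fun_prop) continuous_const
      exact closure_minimal hsub hcl hyin
  have hiso : Isometry J := by
    intro g h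
    rw [edist_dist, edist_dist, dist_eq_norm, dist_eq_norm]
    have : J g - J h = J (g - h) := by ext n; simp [hJ_apply]
    rw [this, hnorm]
  exact hiso.isClosedEmbedding.isClosed_range

include hTH hz0 in
lemma Wset_subset_range : Wset ⊆ Set.range (omegaSeq TH z0) := by
  have h1 := spanP_subset_range TH hTH z0 hz0
  have h2 := range_isClosed TH z0
  calc Wset = closure (spanP : Set (BoundedContinuousFunction ℤ ℂ)) := rfl
    _ ⊆ closure (Set.range (omegaSeq TH z0)) := closure_mono h1
    _ = Set.range (omegaSeq TH z0) := h2.closure_eq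
end dir2

/-- For the system `(𝓗, T)` and the point `0̃`: `ω_{0̃} C(𝓗) = 𝒲`, i.e. the
algebra of sequences `(f(T^n 0̃))_{n ∈ ℤ}`, `f ∈ C(𝓗)`, equals the Weyl
algebra. -/
theorem stmt14 [CompactSpace ↥Hcal] (TH : Equiv.Perm ↥Hcal)
    (hTH : ∀ φ : ↥Hcal, ((TH φ : ↥Hcal) : ℕ → 𝕋 → 𝕋) = Tmap ↑φ)
    (z0 : ↥Hcal) (hz0 : (z0 : ℕ → 𝕋 → 𝕋) = ntil 0) :
    Set.range (omegaSeq TH z0) = Wset := by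
  exact le_antisymm (range_subset_Wset TH hTH z0 hz0) (Wset_subset_range TH hTH z0 hz0)
end
end
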